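/- Let a = m² − n² and b = 2mn for positive integers m > n. If ab is a perfect square, then there exists a rational point (x,y) with y ≠ 0 on the curve y² = x³ − x; consequently (since the congruent-number curve y² = x³ − x has only the rational points with y = 0), ab is never a perfect square. -/

import Mathlib

private lemma sq_pos_of_coprime {a b c : ℤ} (h : IsCoprime a b) (heq : a * b = c ^ 2)
    (ha : 0 < a) : ∃ d : ℤ, a = d ^ 2 := by
  obtain ⟨d, hd | hd⟩ := Int.sq_of_isCoprime h heq
  · exact ⟨d, hd⟩
  · exfalso; nlinarith [sq_nonneg d]

private lemma isSquare_of_sq_mul (c X : ℤ) (hc : c ≠ 0) (h : IsSquare (c ^ 2 * X)) :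
    IsSquare X := by
  obtain ⟨s, hs⟩ := h
  have hdvd : c ∣ s := by
    rw [← Int.pow_dvd_pow_iff (two_ne_zero)]
    exact ⟨X, by linarith [hs]⟩
  obtain ⟨t, rfl⟩ := hdvd
  refine ⟨t, ?_⟩
  have h2 : c ^ 2 * X = c ^ 2 * (t * t) := by ring_nf; ring_nf at hs; linarith
  exact mul_left_cancel₀ (pow_ne_zero 2 hc) h2

/-- Core: no solution to q² + w² = p², p² + q² = 2u² with q odd positive, w ≠ 0. -/
private lemma lemC (p q w u : ℤ) (hq : Odd q) (h0q : 0 < q) (hw : w ≠ 0)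
    (hco : Int.gcd q w = 1) (h0p : 0 < p) (h1 : q ^ 2 + w ^ 2 = p ^ 2)
    (h2 : p ^ 2 + q ^ 2 = 2 * u ^ 2) : False := by
  have ht : PythagoreanTriple q w p := by
    have : q * q + w * w = p * p := by ring_nf; ring_nf at h1; linarith
    exact this
  obtain ⟨M, N, hq', hw', hp', _, _, _⟩ :=
    ht.coprime_classification' hco (Int.odd_iff.mp hq) h0p
  have hM : M ≠ 0 := by
    intro h; rw [h] at hq'; nlinarith
  have hN : N ≠ 0 := by
    intro h; rw [h] at hw'; simp at hw'; exact hw hw'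
  exact not_fermat_42 hM hN (c := u)
    (by rw [hp', hq'] at h2; nlinarith)

/-- No solution to p⁴ - q⁴ = 2r² with p, q odd coprime, 0 < q < p. -/
private lemma lemB2 (p q r : ℤ) (hp : Odd p) (hq : Odd q) (hco : IsCoprime p q)
    (h0q : 0 < q) (hqp : q < p) (heq : p ^ 4 - q ^ 4 = 2 * r ^ 2) : False := by
  have hco0 := hco
  obtain ⟨k, hk⟩ := id hp
  obtain ⟨l, hl⟩ := id hq
  set B : ℤ := 2 * k ^ 2 + 2 * k + 2 * l ^ 2 + 2 * l + 1 with hBdef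
  have hB : p ^ 2 + q ^ 2 = 2 * B := by rw [hk, hl]; ring
  have hβ : B = 2 * (k ^ 2 + k + l ^ 2 + l) + 1 := by ring
  set β : ℤ := k ^ 2 + k + l ^ 2 + l
  -- r² = (p²-q²) * B
  have hr2 : (p ^ 2 - q ^ 2) * B = r ^ 2 := by
    have h2 : 2 * ((p ^ 2 - q ^ 2) * B) = 2 * r ^ 2 := by
      linear_combination heq + (q ^ 2 - p ^ 2) * hB
    linarith
  -- coprimality of p²-q² and B
  obtain ⟨u, v, huv⟩ := id hco0
  have hco2 : IsCoprime (p ^ 2) (q ^ 2) := hco0.pow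
  obtain ⟨U, V, hUV⟩ := hco2
  have hcopB : IsCoprime (p ^ 2 - q ^ 2) B :=
    ⟨-β * (U - V), 1 - 2 * β * (U + V), by
      linear_combination β * (U + V) * hB - 2 * β * hUV + hβ⟩
  have h0D : 0 < p ^ 2 - q ^ 2 := by nlinarith
  have h0B : 0 < B := by nlinarith
  obtain ⟨w, hw2⟩ := sq_pos_of_coprime hcopB hr2 h0D
  obtain ⟨uu, hu2⟩ := sq_pos_of_coprime (hcopB.symm)
    (by rw [mul_comm] at hr2; exact hr2) h0B
  have hwne : w ≠ 0 := by intro h; rw [h] at hw2; simp at hw2; nlinarith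
  -- coprime q w
  have hqp2 : IsCoprime q (p ^ 2) := (hco0.symm).pow_right
  obtain ⟨A, C, hAC⟩ := hqp2
  have hqw2 : IsCoprime q (w ^ 2) :=
    ⟨A + C * q, C, by linear_combination hAC - C * hw2⟩
  have hqw : IsCoprime q w := (IsCoprime.pow_right_iff (by norm_num)).mp hqw2
  exact lemC p q w uu hq h0q hwne (Int.isCoprime_iff_gcd_eq_one.mp hqw)
    (by linarith) (by linear_combination -hw2) (by rw [hB, hu2])

/-- Opposite-parity coprime case. -/
private lemma lemB (m n : ℤ) (hodd : Odd (m + n)) (hco : IsCoprime m n)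
    (hn : 0 < n) (hmn : n < m) : ¬ IsSquare ((m ^ 2 - n ^ 2) * (2 * m * n)) := by
  rintro ⟨s, hs⟩
  obtain ⟨u, v, huv⟩ := id hco
  obtain ⟨k, hk⟩ := id hodd
  have cPm : IsCoprime (m + n) m := ⟨v, u - v, by linear_combination huv⟩
  have cPn : IsCoprime (m + n) n := ⟨u, v - u, by linear_combination huv⟩
  have cQm : IsCoprime (m - n) m := ⟨-v, u + v, by linear_combination huv⟩
  have cQn : IsCoprime (m - n) n := ⟨u, u + v, by linear_combination huv⟩
  have cP2 : IsCoprime (m + n) (2 : ℤ) := ⟨1, -k, by linear_combination hk⟩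
  have cQ2 : IsCoprime (m - n) (2 : ℤ) := ⟨1, -(k - n), by linear_combination hk⟩
  obtain ⟨c, d, hcd⟩ := id cP2
  have cPQ : IsCoprime (m + n) (m - n) :=
    ⟨c + d * (u + v), d * (u - v), by linear_combination hcd + 2 * d * huv⟩
  have c1 : IsCoprime (m + n) (2 * m * n) := (cP2.mul_right cPm).mul_right cPn
  have c2 : IsCoprime (m - n) (2 * m * n) := (cQ2.mul_right cQm).mul_right cQn
  have cprod : IsCoprime ((m + n) * (m - n)) (2 * m * n) := c1.mul_left c2
  have E1 : ((m + n) * (m - n)) * (2 * m * n) = s ^ 2 := by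
    rw [sq]; linear_combination hs
  obtain ⟨e, hE⟩ := sq_pos_of_coprime cprod E1 (by nlinarith)
  obtain ⟨r, hr⟩ := sq_pos_of_coprime cprod.symm
    (by rw [mul_comm] at E1; exact E1) (by nlinarith)
  have E3 : (m + n) * (m - n) = e ^ 2 := hE
  obtain ⟨p', hp'⟩ := sq_pos_of_coprime cPQ E3 (by linarith)
  obtain ⟨q', hq'⟩ := sq_pos_of_coprime cPQ.symm
    (by rw [mul_comm] at E3; exact E3) (by linarith)
  set p : ℤ := |p'| with hpdef
  set q : ℤ := |q'| with hqdef
  have hp2 : m + n = p ^ 2 := by rw [hpdef, sq_abs]; exact hp'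
  have hq2 : m - n = q ^ 2 := by rw [hqdef, sq_abs]; exact hq'
  have h0q : 0 < q := by
    have hne : q ≠ 0 := by
      intro h0; rw [h0] at hq2; norm_num at hq2; omega
    have := abs_nonneg q'
    rw [← hqdef] at this
    omega
  have h0p : 0 < p := by
    have hne : p ≠ 0 := by
      intro h0; rw [h0] at hp2; norm_num at hp2; omega
    have := abs_nonneg p'
    rw [← hpdef] at this
    omega
  have hqltp : q < p := by nlinarith
  -- oddness
  have hpodd : Odd p := by
    rcases Int.even_or_odd p with he | ho
    · exfalso
      have : Even (p ^ 2) := Int.even_pow.mpr ⟨he, by norm_num⟩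
      have : Even (m + n) := by rwa [hp2]
      rcases this with ⟨t, ht⟩
      omega
    · exact ho
  have hqodd : Odd q := by
    rcases Int.even_or_odd q with he | ho
    · exfalso
      have h1 : Even (q ^ 2) := Int.even_pow.mpr ⟨he, by norm_num⟩
      have h2 : Even (m - n) := by rwa [hq2]
      have h3 : Odd (m + n) := ⟨k, hk⟩
      rcases h2 with ⟨t, ht⟩
      omega
    · exact ho
  -- coprime p q
  have hcpq2 : IsCoprime (p ^ 2) (q ^ 2) := by rw [← hp2, ← hq2]; exact cPQ
  have hcpq : IsCoprime p q :=
    (IsCoprime.pow_left_iff (by norm_num)).mp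
      ((IsCoprime.pow_right_iff (by norm_num)).mp hcpq2)
  exact lemB2 p q r hpodd hqodd hcpq h0q hqltp
    (by nlinarith [hp2, hq2, hr])

/-- Main arithmetic lemma. -/
private lemma lemA (m n : ℤ) (hn : 0 < n) (hmn : n < m) :
    ¬ IsSquare ((m ^ 2 - n ^ 2) * (2 * m * n)) := by
  intro hsq
  -- reduce to coprime case
  set g : ℤ := (Int.gcd m n : ℤ) with hgdef
  have hgne : Int.gcd m n ≠ 0 := by
    intro h
    rcases Int.gcd_eq_zero_iff.mp h with ⟨h1, h2⟩
    omega
  have hg0 : 0 < g := by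
    rw [hgdef]
    exact_mod_cast Nat.pos_of_ne_zero hgne
  obtain ⟨m1, hm1⟩ : g ∣ m := Int.gcd_dvd_left m n
  obtain ⟨n1, hn1⟩ : g ∣ n := Int.gcd_dvd_right m n
  have hgcd1 : Int.gcd m1 n1 = 1 := by
    have := Int.gcd_div_gcd_div_gcd (i := m) (j := n) (Nat.pos_of_ne_zero hgne)
    rw [← hgdef] at this
    rw [hm1, hn1, Int.mul_ediv_cancel_left _ (by linarith : g ≠ 0),
        Int.mul_ediv_cancel_left _ (by linarith : g ≠ 0)] at this
    exact this
  have hco1 : IsCoprime m1 n1 := Int.isCoprime_iff_gcd_eq_one.mpr hgcd1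
  have h0n1 : 0 < n1 := by nlinarith
  have h1mn : n1 < m1 := by nlinarith
  have hfact : (m ^ 2 - n ^ 2) * (2 * m * n) =
      (g ^ 2) ^ 2 * ((m1 ^ 2 - n1 ^ 2) * (2 * m1 * n1)) := by
    rw [hm1, hn1]; ring
  rw [hfact] at hsq
  have hsq1 : IsSquare ((m1 ^ 2 - n1 ^ 2) * (2 * m1 * n1)) :=
    isSquare_of_sq_mul _ _ (pow_ne_zero 2 (by linarith)) hsq
  -- parity split
  rcases Int.even_or_odd (m1 + n1) with hev | hod
  · -- m1, n1 both odd (both even impossible by coprimality)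
    have hm1odd : Odd m1 := by
      rcases Int.even_or_odd m1 with he | ho
      · exfalso
        have hne : Even n1 := by
          rcases hev with ⟨t, ht⟩; rcases he with ⟨s', hs'⟩
          exact ⟨t - s', by omega⟩
        have hu : IsUnit (2 : ℤ) := by
          rcases he with ⟨s', hs'⟩; rcases hne with ⟨t', ht'⟩
          exact hco1.isUnit_of_dvd' ⟨s', by omega⟩ ⟨t', by omega⟩
        rw [Int.isUnit_iff] at hu
        omega
      · exact ho
    have hn1odd : Odd n1 := by
      rcases hev with ⟨t, ht⟩; rcases hm1odd with ⟨s', hs'⟩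
      exact ⟨t - s' - 1, by omega⟩
    obtain ⟨a2, ha2⟩ := hm1odd
    obtain ⟨b2, hb2⟩ := hn1odd
    set p : ℤ := a2 + b2 + 1 with hpdef
    set q : ℤ := a2 - b2 with hqdef
    have hm1e : m1 = p + q := by omega
    have hn1e : n1 = p - q := by omega
    have h0q : 0 < q := by omega
    have hqp : q < p := by omega
    have hoddpq : Odd (p + q) := by rw [← hm1e]; exact ⟨a2, ha2⟩
    obtain ⟨u, v, huv⟩ := id hco1
    have hcopq : IsCoprime p q :=
      ⟨u + v, u - v, by rw [hm1e, hn1e] at huv; linear_combination huv⟩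
    have hfact2 : (m1 ^ 2 - n1 ^ 2) * (2 * m1 * n1) =
        2 ^ 2 * ((p ^ 2 - q ^ 2) * (2 * p * q)) := by
      rw [hm1e, hn1e]; ring
    rw [hfact2] at hsq1
    exact lemB p q hoddpq hcopq h0q hqp
      (isSquare_of_sq_mul _ _ (by norm_num) hsq1)
  · exact lemB m1 n1 hod hco1 h0n1 h1mn hsq1

theorem stmt_8 (m n a b : ℤ) (hn : 0 < n) (hmn : n < m)
    (ha : a = m ^ 2 - n ^ 2) (hb : b = 2 * m * n) :
    (IsSquare (a * b) → ∃ x y : ℚ, y ≠ 0 ∧ y ^ 2 = x ^ 3 - x) ∧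
    ¬ IsSquare (a * b) := by
  have key : ¬ IsSquare (a * b) := by
    rw [ha, hb]; exact lemA m n hn hmn
  exact ⟨fun h => absurd h key, key⟩
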